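/- Let X = {x₁,...,x_m} be a Grassmannian frame for R^n with m > n. Then for every j, the set {xᵢ : i ≠ j} spans R^n. -/

import Mathlib

open scoped RealInnerProductSpace
abbrev E (n : ℕ) := EuclideanSpace ℝ (Fin n)
noncomputable def coh {n : ℕ} (X : Set (E n)) : ℝ :=
  sSup {r : ℝ | ∃ x ∈ X, ∃ y ∈ X, x ≠ y ∧ r = |⟪x, y⟫|}
def IsUnitSet {n : ℕ} (X : Set (E n)) : Prop := ∀ x ∈ X, ‖x‖ = 1
def Isolated {n : ℕ} (X : Set (E n)) (x : E n) : Prop :=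
  ∀ y ∈ X, y ≠ x → |⟪x, y⟫| < coh X
def Isolable {n : ℕ} (X : Set (E n)) (x : E n) : Prop :=
  ∀ ε > 0, ∃ x' : E n, ‖x'‖ = 1 ∧ ‖x - x'‖ < ε ∧ ∀ y ∈ X, y ≠ x → |⟪x', y⟫| < coh X
def Grassmannian {n : ℕ} (m : ℕ) (X : Set (E n)) : Prop :=
  IsUnitSet X ∧ X.Finite ∧ X.ncard = m ∧
    ∀ Y : Set (E n), IsUnitSet Y → Y.Finite → Y.ncard = m → coh X ≤ coh Y


private lemma pair_le_coh {n : ℕ} {X : Set (E n)} (hfin : X.Finite) {a b : E n}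
    (ha : a ∈ X) (hb : b ∈ X) (hab : a ≠ b) : |⟪a, b⟫| ≤ coh X := by
  apply le_csSup
  · apply Set.Finite.bddAbove
    apply Set.Finite.subset ((hfin.prod hfin).image fun p => |⟪p.1, p.2⟫|)
    rintro r ⟨u, hu, w, hw, huw, rfl⟩
    exact ⟨(u, w), ⟨hu, hw⟩, rfl⟩
  · exact ⟨a, ha, b, hb, hab, rfl⟩

private lemma coh_lt_of_pairs_lt {n : ℕ} {Z : Set (E n)} (hfin : Z.Finite) {c : ℝ}
    {a b : E n} (ha : a ∈ Z) (hb : b ∈ Z) (hab : a ≠ b)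
    (h : ∀ x ∈ Z, ∀ y ∈ Z, x ≠ y → |⟪x, y⟫| < c) : coh Z < c := by
  have hRfin : {r : ℝ | ∃ x ∈ Z, ∃ y ∈ Z, x ≠ y ∧ r = |⟪x, y⟫|}.Finite := by
    apply Set.Finite.subset ((hfin.prod hfin).image fun p => |⟪p.1, p.2⟫|)
    rintro r ⟨u, hu, w, hw, huw, rfl⟩
    exact ⟨(u, w), ⟨hu, hw⟩, rfl⟩
  have hne : {r : ℝ | ∃ x ∈ Z, ∃ y ∈ Z, x ≠ y ∧ r = |⟪x, y⟫|}.Nonempty :=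
    ⟨_, a, ha, b, hb, hab, rfl⟩
  obtain ⟨u, hu, w, hw, huw, heq⟩ := hne.csSup_mem hRfin
  rw [coh, heq]
  exact h u hu w hw huw

private lemma inner_shift {n : ℕ} {s s' v : E n} (hs : ⟪v, s⟫ = 0) (hs' : ⟪v, s'⟫ = 0)
    (hv : ‖v‖ = 1) (t t' : ℝ) : ⟪s + t • v, s' + t' • v⟫ = ⟪s, s'⟫ + t * t' := by
  have h1 : ⟪s, v⟫ = 0 := by rw [real_inner_comm]; exact hs
  have h2 : ⟪v, v⟫ = 1 := by
    rw [real_inner_self_eq_norm_sq, hv]; norm_num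
  rw [inner_add_left, inner_add_right, inner_add_right, real_inner_smul_left,
    real_inner_smul_left, real_inner_smul_right, real_inner_smul_right, h1, hs', h2]
  ring

private lemma norm_shift {n : ℕ} {s v : E n} (hs : ⟪v, s⟫ = 0) (hv : ‖v‖ = 1) (hsn : ‖s‖ = 1)
    (t : ℝ) : ‖s + t • v‖ = Real.sqrt (1 + t^2) := by
  have h1 : ⟪s, t • v⟫ = 0 := by
    rw [real_inner_smul_right, real_inner_comm, hs, mul_zero]
  rw [← Real.sqrt_sq (norm_nonneg (s + t • v)), norm_add_sq_real, h1, hsn, norm_smul]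
  simp [hv, mul_pow]

private lemma coh_pos {n m : ℕ} (hmn : n < m) {X : Set (E n)} (hunit : IsUnitSet X)
    (hfin : X.Finite) (hcard : X.ncard = m) : 0 < coh X := by
  by_contra hle
  push_neg at hle
  haveI : Fintype ↥X := hfin.fintype
  have horth : Orthonormal ℝ (Subtype.val : X → E n) := by
    constructor
    · exact fun i => hunit i i.2
    · intro i j hij
      have hij' : (i : E n) ≠ (j : E n) := fun h => hij (Subtype.ext h)
      have h1 := pair_le_coh hfin i.2 j.2 hij'
      have h2 : (0:ℝ) ≤ |⟪(i : E n), (j : E n)⟫| := abs_nonneg _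
      have : |⟪(i : E n), (j : E n)⟫| = 0 := le_antisymm (h1.trans hle) h2
      exact abs_eq_zero.mp this
  have hli := horth.linearIndependent
  have hcard2 : Fintype.card ↥X ≤ Module.finrank ℝ (E n) := hli.fintype_card_le_finrank
  rw [finrank_euclideanSpace_fin] at hcard2
  have : X.ncard = Fintype.card ↥X := by
    rw [← Nat.card_coe_set_eq, Nat.card_eq_fintype_card]
  omega

set_option maxHeartbeats 1000000 in
theorem grassmannian_drop_one_spans {n m : ℕ} (hmn : n < m)
    (X : Set (E n)) (hX : Grassmannian m X) :
    ∀ x ∈ X, Submodule.span ℝ (X \ {x}) = ⊤ := by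
  obtain ⟨hunit, hfin, hcard, hopt⟩ := hX
  intro x hx
  by_contra hspan
  -- basic facts
  have hn : 1 ≤ n := by
    by_contra hn0
    have hn0 : n = 0 := by omega
    subst hn0
    have hx0 : x = 0 := Subsingleton.elim x 0
    have h1 := hunit x hx
    rw [hx0, norm_zero] at h1
    exact one_ne_zero h1.symm
  have hm2 : 2 ≤ m := by omega
  set c := coh X with hc_def
  have hc : 0 < c := coh_pos hmn hunit hfin hcard
  have hc1 : c ≤ 1 := by
    apply Real.sSup_le
    · rintro r ⟨u, hu, w, hw, huw, rfl⟩
      calc |⟪u, w⟫| ≤ ‖u‖ * ‖w‖ := abs_real_inner_le_norm u w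
        _ = 1 := by rw [hunit u hu, hunit w hw]; ring
    · norm_num
  set S : Set (E n) := X \ {x} with hS_def
  have hSsub : S ⊆ X := Set.diff_subset
  have hSfin : S.Finite := hfin.diff
  have hScard : S.ncard = m - 1 := by
    rw [hS_def, Set.ncard_diff_singleton_of_mem hx, hcard]
  -- orthogonal unit vector v
  have hKbot : (Submodule.span ℝ S)ᗮ ≠ ⊥ := by
    intro h
    exact hspan (Submodule.orthogonal_eq_bot_iff.mp h)
  obtain ⟨v0, hv0K, hv0⟩ := Submodule.exists_mem_ne_zero_of_ne_bot hKbot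
  set v : E n := ‖v0‖⁻¹ • v0 with hv_def
  have hv : ‖v‖ = 1 := by
    rw [hv_def, norm_smul, norm_inv, norm_norm]
    field_simp [norm_ne_zero_iff.mpr hv0]
  have hvK : v ∈ (Submodule.span ℝ S)ᗮ := Submodule.smul_mem _ _ hv0K
  have hvs : ∀ s ∈ S, ⟪v, s⟫ = 0 := fun s hs =>
    (Submodule.mem_orthogonal' _ v).mp hvK s (Submodule.subset_span hs)
  -- enumeration of S
  haveI : Fintype ↥S := hSfin.fintype
  have hcardS : Fintype.card ↥S = m - 1 := by
    rw [← Nat.card_eq_fintype_card, Nat.card_coe_set_eq, hScard]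
  let e : ↥S ≃ Fin (m - 1) := Fintype.equivFinOfCardEq hcardS
  set b : ℝ := c / 5 with hb_def
  have hb0 : 0 < b := by positivity
  have hb1 : b < 1 := by rw [hb_def]; linarith
  set t : ↥S → ℝ := fun s => (c / 2) * b ^ ((e s : ℕ) + 1) with ht_def
  have ht_pos : ∀ s, 0 < t s := fun s => by positivity
  have ht_le : ∀ s, t s ≤ c / 10 := by
    intro s
    have h1 : b ^ ((e s : ℕ) + 1) ≤ b ^ 1 :=
      pow_le_pow_of_le_one hb0.le hb1.le (by omega)
    have : t s ≤ (c / 2) * b := by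
      rw [ht_def]
      calc (c / 2) * b ^ ((e s : ℕ) + 1) ≤ (c/2) * b ^ 1 := by
            apply mul_le_mul_of_nonneg_left h1 (by positivity)
        _ = (c/2) * b := by ring
    nlinarith
  have ht_ratio : ∀ s s', s ≠ s' → t s * t s' ≤ (t s ^ 2 + t s' ^ 2) * b := by
    have key : ∀ s s', (e s : ℕ) < (e s' : ℕ) → t s * t s' ≤ (t s ^ 2 + t s' ^ 2) * b := by
      intro s s' hlt
      have h1 : b ^ ((e s' : ℕ) + 1) ≤ b ^ ((e s : ℕ) + 1) * b := by
        rw [← pow_succ]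
        exact pow_le_pow_of_le_one hb0.le hb1.le (by omega)
      have h2 : t s' ≤ t s * b := by
        rw [ht_def]
        simp only
        calc (c/2) * b ^ ((e s' : ℕ) + 1) ≤ (c/2) * (b ^ ((e s : ℕ) + 1) * b) := by
              apply mul_le_mul_of_nonneg_left h1 (by positivity)
          _ = (c/2) * b ^ ((e s : ℕ) + 1) * b := by ring
      nlinarith [ht_pos s, ht_pos s', sq_nonneg (t s'), sq_nonneg (t s)]
    intro s s' hne
    have hee : (e s : ℕ) ≠ (e s' : ℕ) := by
      intro h
      exact hne (e.injective (Fin.ext h))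
    rcases lt_or_gt_of_ne hee with h | h
    · exact key s s' h
    · have := key s' s h
      nlinarith [this]
  -- the perturbed vectors
  set g : ↥S → E n := fun s => (Real.sqrt (1 + t s ^ 2))⁻¹ • ((s : E n) + t s • v) with hg_def
  have hsq_pos : ∀ s, (0:ℝ) < Real.sqrt (1 + t s ^ 2) := by
    intro s; apply Real.sqrt_pos.mpr; nlinarith [sq_nonneg (t s)]
  have hsq_ge1 : ∀ s, (1:ℝ) ≤ Real.sqrt (1 + t s ^ 2) := by
    intro s
    have h := Real.sqrt_le_sqrt (show (1:ℝ) ≤ 1 + t s ^ 2 by nlinarith [sq_nonneg (t s)])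
    simpa using h
  have hg_norm : ∀ s, ‖g s‖ = 1 := by
    intro s
    rw [hg_def]
    simp only
    rw [norm_smul, norm_shift (hvs s s.2) hv (hunit s (hSsub s.2)) (t s), norm_inv,
      Real.norm_eq_abs, abs_of_pos (hsq_pos s)]
    field_simp
  have hgv : ∀ s, ⟪g s, v⟫ = (Real.sqrt (1 + t s ^ 2))⁻¹ * t s := by
    intro s
    rw [hg_def]
    simp only
    rw [real_inner_smul_left, inner_add_left, real_inner_smul_left]
    have h1 : ⟪(s : E n), v⟫ = 0 := by rw [real_inner_comm]; exact hvs s s.2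
    have h2 : ⟪v, v⟫ = 1 := by
      rw [real_inner_self_eq_norm_sq, hv]; norm_num
    rw [h1, h2]; ring
  have hgg : ∀ s s', ⟪g s, g s'⟫ =
      (Real.sqrt (1 + t s ^ 2))⁻¹ * ((Real.sqrt (1 + t s' ^ 2))⁻¹ *
        (⟪(s : E n), (s' : E n)⟫ + t s * t s')) := by
    intro s s'
    rw [hg_def]
    simp only
    rw [real_inner_smul_left, real_inner_smul_right,
      inner_shift (hvs s s.2) (hvs s' s'.2) hv]
  have hgv_lt : ∀ s, |⟪g s, v⟫| < c := by
    intro s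
    rw [hgv s, abs_of_pos (by positivity : (0:ℝ) < (Real.sqrt (1 + t s ^ 2))⁻¹ * t s)]
    have h1 : (Real.sqrt (1 + t s ^ 2))⁻¹ ≤ 1 := by
      rw [inv_le_one_iff₀]; right; exact hsq_ge1 s
    calc (Real.sqrt (1 + t s ^ 2))⁻¹ * t s ≤ 1 * t s := by
          apply mul_le_mul_of_nonneg_right h1 (ht_pos s).le
      _ = t s := by ring
      _ ≤ c / 10 := ht_le s
      _ < c := by linarith
  have hg_ne_v : ∀ s, g s ≠ v := by
    intro s h
    have h1 : ⟪g s, v⟫ = 1 := by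
      rw [h, real_inner_self_eq_norm_sq, hv]; norm_num
    have := hgv_lt s
    rw [h1] at this
    rw [abs_one] at this
    linarith
  have ht_inj : Function.Injective t := by
    intro s s' h
    by_contra hne
    have hee : (e s : ℕ) ≠ (e s' : ℕ) := by
      intro heq
      exact hne (e.injective (Fin.ext heq))
    have key : ∀ u u' : ↥S, (e u : ℕ) < (e u' : ℕ) → t u' < t u := by
      intro u u' hlt
      apply mul_lt_mul_of_pos_left _ (by positivity : (0:ℝ) < c/2)
      exact pow_lt_pow_right_of_lt_one₀ hb0 hb1 (by omega)
    rcases lt_or_gt_of_ne hee with hlt | hlt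
    · have := key s s' hlt; linarith
    · have := key s' s hlt; linarith
  have hg_inj : Function.Injective g := by
    intro s s' h
    have h1 : ⟪g s, v⟫ = ⟪g s', v⟫ := by rw [h]
    rw [hgv s, hgv s'] at h1
    -- deduce t s = t s'
    have hA := hsq_pos s
    have hB := hsq_pos s'
    have hA2 : Real.sqrt (1 + t s ^ 2) ^ 2 = 1 + t s ^ 2 :=
      Real.sq_sqrt (by nlinarith [sq_nonneg (t s)])
    have hB2 : Real.sqrt (1 + t s' ^ 2) ^ 2 = 1 + t s' ^ 2 :=
      Real.sq_sqrt (by nlinarith [sq_nonneg (t s')])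
    have h2 : t s * Real.sqrt (1 + t s' ^ 2) = t s' * Real.sqrt (1 + t s ^ 2) := by
      field_simp at h1
      linarith [h1]
    have h3 : t s ^ 2 * (1 + t s' ^ 2) = t s' ^ 2 * (1 + t s ^ 2) := by
      have := congrArg (· ^ 2) h2
      simp only [mul_pow] at this
      rw [hA2, hB2] at this
      linarith
    have h4 : t s = t s' := by
      have hts := ht_pos s
      have hts' := ht_pos s'
      nlinarith
    exact ht_inj h4
  -- the competitor set Z
  set Z : Set (E n) := insert v (Set.range g) with hZ_def
  have hZunit : IsUnitSet Z := by
    intro z hz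
    rcases Set.mem_insert_iff.mp hz with rfl | hz'
    · exact hv
    · obtain ⟨s, rfl⟩ := hz'
      exact hg_norm s
  have hZfin : Z.Finite := (Set.finite_range g).insert v
  have hZcard : Z.ncard = m := by
    rw [hZ_def, Set.ncard_insert_of_notMem (by rintro ⟨s, h⟩; exact hg_ne_v s h)
      (Set.finite_range g)]
    have : (Set.range g).ncard = m - 1 := by
      rw [← Nat.card_coe_set_eq, Nat.card_range_of_injective hg_inj,
        Nat.card_eq_fintype_card, hcardS]
    omega
  -- all pairs in Z have coherence < c
  have hpairs : ∀ a ∈ Z, ∀ b' ∈ Z, a ≠ b' → |⟪a, b'⟫| < c := by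
    intro a ha b' hb' hab
    rcases Set.mem_insert_iff.mp ha with rfl | ⟨s, rfl⟩ <;>
      rcases Set.mem_insert_iff.mp hb' with rfl | ⟨s', rfl⟩
    · exact absurd rfl hab
    · rw [real_inner_comm]; exact hgv_lt s'
    · exact hgv_lt s
    · have hss' : s ≠ s' := fun h => hab (by rw [h])
      have hval : (s : E n) ≠ (s' : E n) := fun h => hss' (Subtype.ext h)
      have hip : |⟪(s : E n), (s' : E n)⟫| ≤ c :=
        pair_le_coh hfin (hSsub s.2) (hSsub s'.2) hval
      rw [hgg s s']
      have hA := hsq_pos s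
      have hB := hsq_pos s'
      have hA2 : Real.sqrt (1 + t s ^ 2) ^ 2 = 1 + t s ^ 2 :=
        Real.sq_sqrt (by nlinarith [sq_nonneg (t s)])
      have hB2 : Real.sqrt (1 + t s' ^ 2) ^ 2 = 1 + t s' ^ 2 :=
        Real.sq_sqrt (by nlinarith [sq_nonneg (t s')])
      rw [abs_mul, abs_mul, abs_inv, abs_inv, abs_of_pos hA, abs_of_pos hB]
      have hnum : |⟪(s : E n), (s' : E n)⟫ + t s * t s'| ≤ c + t s * t s' := by
        calc |⟪(s : E n), (s' : E n)⟫ + t s * t s'| ≤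
            |⟪(s : E n), (s' : E n)⟫| + |t s * t s'| := abs_add_le _ _
          _ ≤ c + t s * t s' := by
              rw [abs_of_pos (mul_pos (ht_pos s) (ht_pos s'))]
              linarith
      -- key inequality
      have hkey : 2 * c * (t s * t s') + (t s * t s') ^ 2 < c ^ 2 * (t s ^ 2 + t s' ^ 2) := by
        have hr := ht_ratio s s' hss'
        have hsm : t s * t s' ≤ c ^ 2 / 100 := by
          have := ht_le s
          have := ht_le s'
          nlinarith [ht_pos s, ht_pos s']
        have hsum : 0 < t s ^ 2 + t s' ^ 2 := by positivity
        rw [hb_def] at hr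
        nlinarith [mul_pos (ht_pos s) (ht_pos s'), hsum, sq_nonneg (t s * t s')]
      -- conclude
      have hprod_pos : 0 < Real.sqrt (1 + t s ^ 2) * Real.sqrt (1 + t s' ^ 2) :=
        mul_pos hA hB
      have hfinal : c + t s * t s' <
          c * (Real.sqrt (1 + t s ^ 2) * Real.sqrt (1 + t s' ^ 2)) := by
        have hlhs : 0 ≤ c + t s * t s' := by positivity
        have hsq : (c + t s * t s') ^ 2 <
            (c * (Real.sqrt (1 + t s ^ 2) * Real.sqrt (1 + t s' ^ 2))) ^ 2 := by
          have : (c * (Real.sqrt (1 + t s ^ 2) * Real.sqrt (1 + t s' ^ 2))) ^ 2 =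
              c ^ 2 * ((1 + t s ^ 2) * (1 + t s' ^ 2)) := by
            rw [mul_pow, mul_pow, hA2, hB2]
          rw [this]
          nlinarith [hkey, sq_nonneg (t s * t s'), sq_nonneg c]
        nlinarith [hsq, hlhs, mul_pos (mul_pos hc hA) hB]
      have hmono : (Real.sqrt (1 + t s ^ 2))⁻¹ * ((Real.sqrt (1 + t s' ^ 2))⁻¹ *
            |⟪(s : E n), (s' : E n)⟫ + t s * t s'|) ≤
          (Real.sqrt (1 + t s ^ 2))⁻¹ * ((Real.sqrt (1 + t s' ^ 2))⁻¹ *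
            (c + t s * t s')) := by
        gcongr
      apply lt_of_le_of_lt hmono
      rw [← mul_assoc, ← mul_inv, inv_mul_lt_iff₀ hprod_pos]
      nlinarith [hfinal]
  -- get a distinct pair in Z and conclude
  have hSne : S.Nonempty := by
    apply Set.nonempty_of_ncard_ne_zero
    omega
  obtain ⟨s0, hs0⟩ := hSne
  have hcohZ : coh Z < c :=
    coh_lt_of_pairs_lt hZfin (Set.mem_insert_iff.mpr (Or.inr ⟨⟨s0, hs0⟩, rfl⟩))
      (Set.mem_insert v _) (fun h => hg_ne_v ⟨s0, hs0⟩ h) hpairs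
  have := hopt Z hZunit hZfin hZcard
  linarith
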